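/- Let G be a k×n matrix over a finite field F_q generating a linear code C (i.e., C is the row space of G and G has rank k). Then det(GGᵀ) ≠ 0 if and only if C ∩ C⊥ = {0} (i.e., C is an LCD code). -/

import Mathlib

open Matrix

/-- The Euclidean dual of a linear code `C ⊆ F^ι`:
all vectors orthogonal (w.r.t. the standard bilinear form) to every codeword. -/
def dualCode (F : Type*) [Field F] {ι : Type*} [Fintype ι]
    (C : Submodule F (ι → F)) : Submodule F (ι → F) where
  carrier := {v | ∀ c ∈ C, v ⬝ᵥ c = 0}
  add_mem' := by
    intro a b ha hb c hc
    simp [add_dotProduct, ha c hc, hb c hc]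
  zero_mem' := by intro c hc; simp
  smul_mem' := by
    intro r a ha c hc
    simp [smul_dotProduct, ha c hc]

/-- The row space of a matrix: the span of its rows. -/
def rowSpace (F : Type*) [Field F] {κ ι : Type*} (G : Matrix κ ι F) :
    Submodule F (ι → F) := Submodule.span F (Set.range fun k => G k)

lemma mem_rowSpace_iff (F : Type*) [Field F] {κ ι : Type*} [Fintype κ]
    (G : Matrix κ ι F) (v : ι → F) :
    v ∈ rowSpace F G ↔ ∃ x : κ → F, x ᵥ* G = v := by
  rw [rowSpace, show (fun k => G k) = G.row from rfl, ← range_vecMulLinear]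
  rfl

/-- Massey: `det (G Gᵀ) ≠ 0` iff the code generated by `G` is LCD. -/
theorem stmt1 (F : Type*) [Field F] [Fintype F] {n k : ℕ}
    (G : Matrix (Fin k) (Fin n) F) (hG : G.rank = k)
    (C : Submodule F (Fin n → F)) (hC : C = rowSpace F G) :
    (G * Gᵀ).det ≠ 0 ↔ C ⊓ dualCode F C = ⊥ := by
  subst hC
  -- rows of G are linearly independent
  have hli : LinearIndependent F (fun i => G i) := by
    rw [linearIndependent_iff_card_eq_finrank_span]
    rw [Matrix.rank_eq_finrank_span_row] at hG
    simp [Set.finrank, ← hG]; rfl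
  have hinj : Function.Injective G.vecMul := Matrix.vecMul_injective_iff.mpr hli
  -- key computation: (G * Gᵀ) *ᵥ x  at i  = G i ⬝ᵥ (x ᵥ* G)
  have key : ∀ (x : Fin k → F) (i : Fin k),
      ((G * Gᵀ) *ᵥ x) i = (x ᵥ* G) ⬝ᵥ (G i) := by
    intro x i
    simp [Matrix.mulVec, Matrix.vecMul, dotProduct, Matrix.mul_apply,
      Finset.sum_mul, Finset.mul_sum]
    rw [Finset.sum_comm]
    congr 1; ext j; congr 1; ext l; ring
  constructor
  · intro hdet
    rw [Submodule.eq_bot_iff]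
    rintro v ⟨hv1, hv2⟩
    obtain ⟨x, hx⟩ := (mem_rowSpace_iff F G v).mp hv1
    have hx0 : (G * Gᵀ) *ᵥ x = 0 := by
      funext i
      rw [key, hx]
      exact hv2 (G i) (Submodule.subset_span ⟨i, rfl⟩)
    have : x = 0 := by
      by_contra h0
      exact hdet (Matrix.exists_mulVec_eq_zero_iff.mp ⟨x, h0, hx0⟩)
    rw [← hx, this, Matrix.zero_vecMul]
  · intro hbot hdet
    obtain ⟨x, hx0, hxz⟩ := Matrix.exists_mulVec_eq_zero_iff.mpr hdet
    set v := x ᵥ* G with hv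
    have hvC : v ∈ rowSpace F G := (mem_rowSpace_iff F G v).mpr ⟨x, rfl⟩
    have hvD : v ∈ dualCode F (rowSpace F G) := by
      intro c hc
      obtain ⟨y, hy⟩ := (mem_rowSpace_iff F G c).mp hc
      rw [← hy]
      have : ∀ i, v ⬝ᵥ (G i) = 0 := by
        intro i
        have := congr_fun hxz i
        rwa [key] at this
      calc v ⬝ᵥ (y ᵥ* G) = ∑ i, y i * (v ⬝ᵥ G i) := by
            simp [Matrix.vecMul, dotProduct, Finset.mul_sum]
            rw [Finset.sum_comm]
            congr 1; ext j; congr 1; ext l; ring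
        _ = 0 := by simp [this]
    have hv0 : v = 0 := (Submodule.eq_bot_iff _).mp hbot v ⟨hvC, hvD⟩
    exact hx0 (hinj (by simpa [Matrix.zero_vecMul] using hv0))
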